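/- Let b > 0, d > 0, c > 0. Then there exists a unique φ₀ ∈ (0, √c) such that b d φ₀ (c - φ₀²)^(-(b+2)/2) = 1. Moreover V''(φ) = b d φ (c - φ²)^(-(b+2)/2) - 1 < 0 for all φ ∈ (-√c, φ₀) and V''(φ) > 0 for all φ ∈ (φ₀, √c). -/
import Mathlib

open Real Set Filter Topology

/-- For `b > 0`, `d > 0`, `c > 0`, there exists a unique
`φ₀ ∈ (0, √c)` with `b d φ₀ (c - φ₀²)^(-(b+2)/2) = 1`; moreover
`V''(φ) = b d φ (c - φ²)^(-(b+2)/2) - 1 < 0` for all `φ ∈ (-√c, φ₀)` and `V''(φ) > 0`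
for all `φ ∈ (φ₀, √c)`. -/
theorem stmt6 (b d c : ℝ) (hb : 0 < b) (hd : 0 < d) (hc : 0 < c) :
    ∃ φ₀ ∈ Set.Ioo (0:ℝ) (Real.sqrt c),
      b * d * φ₀ * (c - φ₀ ^ 2) ^ (-(b + 2) / 2) = 1 ∧
      (∀ ψ ∈ Set.Ioo (0:ℝ) (Real.sqrt c),
        b * d * ψ * (c - ψ ^ 2) ^ (-(b + 2) / 2) = 1 → ψ = φ₀) ∧
      (∀ φ ∈ Set.Ioo (-Real.sqrt c) φ₀,
        b * d * φ * (c - φ ^ 2) ^ (-(b + 2) / 2) - 1 < 0) ∧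
      (∀ φ ∈ Set.Ioo φ₀ (Real.sqrt c),
        0 < b * d * φ * (c - φ ^ 2) ^ (-(b + 2) / 2) - 1) := by
  set e : ℝ := -(b + 2) / 2 with he
  have hse : e < 0 := div_neg_of_neg_of_pos (by linarith) two_pos
  set g : ℝ → ℝ := fun φ => b * d * φ * (c - φ ^ 2) ^ e with hg
  have hsc : 0 < Real.sqrt c := Real.sqrt_pos.mpr hc
  have hsub : ∀ {x : ℝ}, 0 ≤ x → x < Real.sqrt c → 0 < c - x ^ 2 := by
    intro x hx hxc
    have := (Real.lt_sqrt hx).mp hxc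
    linarith
  -- strict monotonicity on [0, √c)
  have smono : ∀ x y : ℝ, 0 ≤ x → x < y → y < Real.sqrt c → g x < g y := by
    intro x y hx hxy hyc
    have hy : 0 < y := lt_of_le_of_lt hx hxy
    have hcy : 0 < c - y ^ 2 := hsub hy.le hyc
    have hcx : 0 < c - x ^ 2 := hsub hx (hxy.trans hyc)
    have hbase : c - y ^ 2 < c - x ^ 2 := by nlinarith
    have hA : (c - x ^ 2) ^ e < (c - y ^ 2) ^ e :=
      Real.rpow_lt_rpow_of_neg hcy hbase hse
    have hApos : 0 < (c - x ^ 2) ^ e := Real.rpow_pos_of_pos hcx e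
    have h1 : b * d * x < b * d * y := by
      have := mul_pos hb hd; nlinarith
    exact mul_lt_mul h1 hA.le hApos (by positivity)
  -- find t near √c with g t > 1
  have hcont0 : ContinuousAt (fun t : ℝ => (c - t ^ 2) ^ ((b + 2) / 2)) (Real.sqrt c) := by
    apply ContinuousAt.rpow_const (by fun_prop)
    right; positivity
  have hval : (c - Real.sqrt c ^ 2) ^ ((b + 2) / 2) = 0 := by
    rw [Real.sq_sqrt hc.le, sub_self, Real.zero_rpow (by positivity)]
  have hev : ∀ᶠ t in 𝓝[<] (Real.sqrt c),
      (c - t ^ 2) ^ ((b + 2) / 2) < b * d * (Real.sqrt c / 2) := by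
    have h2 : Tendsto (fun t : ℝ => (c - t ^ 2) ^ ((b + 2) / 2)) (𝓝[<] (Real.sqrt c)) (𝓝 0) := by
      rw [← hval]
      exact hcont0.continuousWithinAt
    exact h2.eventually_lt_const (by positivity : (0:ℝ) < b * d * (Real.sqrt c / 2))
  have hev2 : ∀ᶠ t in 𝓝[<] (Real.sqrt c), t ∈ Set.Ioo (Real.sqrt c / 2) (Real.sqrt c) :=
    Ioo_mem_nhdsLT_of_mem ⟨by linarith, le_refl _⟩
  obtain ⟨t, ht1, ht2⟩ := (hev.and hev2).exists
  have htpos : 0 < t := lt_trans (by positivity) ht2.1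
  have htc : t < Real.sqrt c := ht2.2
  have hct : 0 < c - t ^ 2 := hsub htpos.le htc
  have hgt : 1 < g t := by
    have h3 : (c - t ^ 2) ^ ((b + 2) / 2) < b * d * t := by
      calc (c - t ^ 2) ^ ((b + 2) / 2) < b * d * (Real.sqrt c / 2) := ht1
        _ ≤ b * d * t := by nlinarith [mul_pos hb hd, ht2.1]
    have hAe : (c - t ^ 2) ^ e = ((c - t ^ 2) ^ ((b + 2) / 2))⁻¹ := by
      rw [he, neg_div, Real.rpow_neg hct.le]
    have hP : 0 < (c - t ^ 2) ^ ((b + 2) / 2) := Real.rpow_pos_of_pos hct _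
    show 1 < b * d * t * (c - t ^ 2) ^ e
    rw [hAe, ← div_eq_mul_inv]
    exact (one_lt_div hP).mpr h3
  -- continuity of g on [0, t]
  have hgc : ContinuousOn g (Set.Icc 0 t) := by
    apply ContinuousOn.mul (by fun_prop)
    intro x hx
    apply (ContinuousAt.rpow_const (by fun_prop) ?_).continuousWithinAt
    left
    exact ne_of_gt (hsub hx.1 (lt_of_le_of_lt hx.2 htc))
  have hg0 : g 0 = 0 := by show b * d * 0 * _ = 0; ring
  have hone : (1:ℝ) ∈ Set.Ioo (g 0) (g t) := by
    rw [hg0]; exact ⟨one_pos, hgt⟩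
  obtain ⟨φ₀, hφ₀mem, hφ₀⟩ := intermediate_value_Ioo htpos.le hgc hone
  have hφ₀c : φ₀ ∈ Set.Ioo (0:ℝ) (Real.sqrt c) := ⟨hφ₀mem.1, hφ₀mem.2.trans htc⟩
  refine ⟨φ₀, hφ₀c, hφ₀, ?_, ?_, ?_⟩
  · intro ψ hψ hψeq
    by_contra hne
    rcases lt_or_gt_of_ne hne with h | h
    · have := smono ψ φ₀ hψ.1.le h hφ₀c.2
      rw [hφ₀] at this; simp only [hg] at this
      rw [hψeq] at this; exact lt_irrefl _ this
    · have := smono φ₀ ψ hφ₀c.1.le h hψ.2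
      rw [hφ₀] at this; simp only [hg] at this
      rw [hψeq] at this; exact lt_irrefl _ this
  · intro φ hφ
    rcases le_or_gt φ 0 with h0 | h0
    · have hφ2 : φ ^ 2 < c := by
        have h1 : -Real.sqrt c < φ := hφ.1
        nlinarith [Real.sq_sqrt hc.le]
      have hApos : (0:ℝ) ≤ (c - φ ^ 2) ^ e := (Real.rpow_pos_of_pos (by linarith) e).le
      have : b * d * φ * (c - φ ^ 2) ^ e ≤ 0 := by
        apply mul_nonpos_of_nonpos_of_nonneg _ hApos
        nlinarith [mul_pos hb hd]
      linarith
    · have := smono φ φ₀ h0.le hφ.2 hφ₀c.2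
      rw [hφ₀] at this; simp only [hg] at this
      linarith
  · intro φ hφ
    have := smono φ₀ φ hφ₀c.1.le hφ.1 hφ.2
    rw [hφ₀] at this; simp only [hg] at this
    linarith
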